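/- Let (Z_k)_{k≥1} be i.i.d. nonnegative random variables with m_ε := E[Z_1^ε] < ∞ for some 0 < ε < 1, and let t be a positive-integer-valued random variable with P(t > n) ≤ c n^{-1/2} for all n ≥ 1. Then for any 0 < r < ε/5, the random variable B = Σ_{k=1}^{t} Z_k satisfies E[B^r] < ∞. -/

import Mathlib

open MeasureTheory ProbabilityTheory Finset

private lemma aux_rpow_add_le {p x y : ℝ} (hp : 0 ≤ p) (hp1 : p ≤ 1)
    (hx : 0 ≤ x) (hy : 0 ≤ y) : (x + y) ^ p ≤ x ^ p + y ^ p := by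
  have h := NNReal.rpow_add_le_add_rpow x.toNNReal y.toNNReal hp hp1
  have h2 : (((x.toNNReal + y.toNNReal : NNReal) : ℝ)) ^ p
      ≤ ((x.toNNReal : ℝ)) ^ p + ((y.toNNReal : ℝ)) ^ p := by
    rw [← NNReal.coe_rpow, ← NNReal.coe_rpow, ← NNReal.coe_rpow]
    exact_mod_cast h
  simpa [Real.coe_toNNReal x hx, Real.coe_toNNReal y hy] using h2

private lemma aux_sum_rpow_le {ι : Type*} {p : ℝ} (hp : 0 < p) (hp1 : p ≤ 1) (s : Finset ι)
    (f : ι → ℝ) (hf : ∀ i, 0 ≤ f i) :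
    (∑ i ∈ s, f i) ^ p ≤ ∑ i ∈ s, f i ^ p := by
  induction s using Finset.cons_induction with
  | empty => simp [Real.zero_rpow hp.ne']
  | cons a s ha ih =>
    rw [Finset.sum_cons, Finset.sum_cons]
    have h1 : (f a + ∑ i ∈ s, f i) ^ p ≤ f a ^ p + (∑ i ∈ s, f i) ^ p :=
      aux_rpow_add_le hp.le hp1 (hf a) (Finset.sum_nonneg fun i _ => hf i)
    linarith

private lemma aux_ofReal_le_tsum (x : ℝ) :
    ENNReal.ofReal x ≤ ∑' n : ℕ, (if (n : ℝ) < x then (1 : ENNReal) else 0) := by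
  have hts : ∑' n : ℕ, (if (n : ℝ) < x then (1 : ENNReal) else 0)
      = ∑ n ∈ Finset.range ⌈x⌉₊, (1 : ENNReal) := by
    rw [tsum_eq_sum (s := Finset.range ⌈x⌉₊)
      (fun n hn => if_neg fun h => hn (Finset.mem_range.2 (Nat.lt_ceil.2 h)))]
    exact Finset.sum_congr rfl fun n hn => if_pos (Nat.lt_ceil.1 (Finset.mem_range.1 hn))
  rw [hts, Finset.sum_const, Finset.card_range, nsmul_eq_mul, mul_one]
  calc ENNReal.ofReal x ≤ ENNReal.ofReal ((⌈x⌉₊ : ℝ)) :=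
        ENNReal.ofReal_le_ofReal (Nat.le_ceil x)
    _ = (⌈x⌉₊ : ENNReal) := ENNReal.ofReal_natCast _

/-- If `(Z_k)` are i.i.d. nonnegative with `E[Z_1^ε] < ∞` for some `0 < ε < 1`, and `t`
is a positive-integer-valued random variable with `P(t > n) ≤ c n^{-1/2}`, then
`B = Σ_{k=1}^t Z_k` satisfies `E[B^r] < ∞` for every `0 < r < ε/5`. -/
theorem stmt_14 {Ω : Type*} [MeasurableSpace Ω] (μ : Measure Ω) [IsProbabilityMeasure μ]
    (Z : ℕ → Ω → ℝ) (hZmeas : ∀ k, Measurable (Z k)) (hZnn : ∀ k ω, 0 ≤ Z k ω)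
    (hiid : iIndepFun (fun k ω => Z (k + 1) ω) μ)
    (hid : ∀ k : ℕ, 1 ≤ k → Measure.map (Z k) μ = Measure.map (Z 1) μ)
    {ε : ℝ} (hε0 : 0 < ε) (hε1 : ε < 1)
    (hmom : Integrable (fun ω => Z 1 ω ^ ε) μ)
    (t : Ω → ℕ) (htmeas : Measurable t) (ht1 : ∀ ω, 1 ≤ t ω)
    {c : ℝ} (htail : ∀ n : ℕ, 1 ≤ n →
      μ {ω | n < t ω} ≤ ENNReal.ofReal (c * (n : ℝ) ^ (-(1 / 2) : ℝ)))
    {r : ℝ} (hr0 : 0 < r) (hr : r < ε / 5) :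
    ∫⁻ ω, ENNReal.ofReal ((∑ k ∈ Icc 1 (t ω), Z k ω) ^ r) ∂μ < ⊤ := by
  set B : Ω → ℝ := fun ω => ∑ k ∈ Icc 1 (t ω), Z k ω with hBdef
  have hBnn : ∀ ω, 0 ≤ B ω := fun ω => Finset.sum_nonneg fun k _ => hZnn k ω
  have hBmeas : Measurable B := by
    have h1 : Measurable fun p : Ω × ℕ => ∑ k ∈ Icc 1 p.2, Z k p.1 :=
      measurable_from_prod_countable_left fun n => by
        show Measurable fun x : Ω => ∑ k ∈ Icc 1 n, Z k x
        exact Finset.measurable_sum _ fun k _ => hZmeas k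
    exact h1.comp (measurable_id.prodMk htmeas)
  have hset : ∀ n : ℕ, MeasurableSet {ω | (n : ℝ) < B ω ^ r} :=
    fun n => measurableSet_lt measurable_const (by fun_prop)
  -- Step 1: tail-sum bound
  have key : ∫⁻ ω, ENNReal.ofReal (B ω ^ r) ∂μ ≤ ∑' n : ℕ, μ {ω | (n : ℝ) < B ω ^ r} := by
    have hpt : ∀ ω, ENNReal.ofReal (B ω ^ r)
        ≤ ∑' n : ℕ, Set.indicator {ω' | (n : ℝ) < B ω' ^ r} (fun _ => (1 : ENNReal)) ω := by
      intro ω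
      refine le_trans (aux_ofReal_le_tsum (B ω ^ r)) (le_of_eq (tsum_congr fun n => ?_))
      simp [Set.indicator_apply]
    calc ∫⁻ ω, ENNReal.ofReal (B ω ^ r) ∂μ
        ≤ ∫⁻ ω, ∑' n : ℕ, Set.indicator {ω' | (n : ℝ) < B ω' ^ r} (fun _ => (1 : ENNReal)) ω ∂μ :=
          lintegral_mono hpt
      _ = ∑' n : ℕ, ∫⁻ ω, Set.indicator {ω' | (n : ℝ) < B ω' ^ r} (fun _ => (1 : ENNReal)) ω ∂μ :=
          lintegral_tsum fun n => (measurable_one.indicator (hset n)).aemeasurable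
      _ = ∑' n : ℕ, μ {ω | (n : ℝ) < B ω ^ r} :=
          tsum_congr fun n => lintegral_indicator_one (hset n)
  -- constants
  have hεr : 3 * r < ε := by linarith
  set a : ℝ := (ε + r) / 2 with ha
  have ha0 : 0 < a := by positivity
  set M := ∫⁻ ω, ENNReal.ofReal (Z 1 ω ^ ε) ∂μ with hMdef
  have hMlt : M < ⊤ := by
    have h := hmom.hasFiniteIntegral
    rw [HasFiniteIntegral] at h
    refine lt_of_eq_of_lt ?_ h
    refine lintegral_congr fun ω => ?_
    rw [← ofReal_norm, Real.norm_of_nonneg (Real.rpow_nonneg (hZnn 1 ω) ε)]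
  have hMk : ∀ k : ℕ, 1 ≤ k → ∫⁻ ω, ENNReal.ofReal (Z k ω ^ ε) ∂μ = M := by
    intro k hk
    have hfm : Measurable fun x : ℝ => ENNReal.ofReal (x ^ ε) := by fun_prop
    calc ∫⁻ ω, ENNReal.ofReal (Z k ω ^ ε) ∂μ
        = ∫⁻ x, ENNReal.ofReal (x ^ ε) ∂(μ.map (Z k)) := (lintegral_map hfm (hZmeas k)).symm
      _ = ∫⁻ x, ENNReal.ofReal (x ^ ε) ∂(μ.map (Z 1)) := by rw [hid k hk]
      _ = M := lintegral_map hfm (hZmeas 1)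
  set c' : ℝ := max c 0 with hc'
  have hc'0 : 0 ≤ c' := le_max_right c 0
  set β₁ : ℝ := r⁻¹ * (a - ε) with hβ₁def
  set β₂ : ℝ := r⁻¹ * (-(a / 2)) with hβ₂def
  have hinv : r * r⁻¹ = 1 := mul_inv_cancel₀ hr0.ne'
  have hb : 3 < ε / r := (lt_div_iff₀ hr0).2 (by linarith)
  have hdiv : ε * r⁻¹ = ε / r := (div_eq_mul_inv ε r).symm
  have hβ₁ : β₁ < -1 := by
    have he : β₁ = (r * r⁻¹) / 2 - (ε * r⁻¹) / 2 := by rw [hβ₁def, ha]; ring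
    rw [he, hinv, hdiv]; linarith
  have hβ₂ : β₂ < -1 := by
    have he : β₂ = -((r * r⁻¹) / 4) - (ε * r⁻¹) / 4 := by rw [hβ₂def, ha]; ring
    rw [he, hinv, hdiv]; linarith
  -- Step 2: bound for each n ≥ 1
  have hterm : ∀ n : ℕ, 1 ≤ n → μ {ω | (n : ℝ) < B ω ^ r}
      ≤ M * ENNReal.ofReal (2 * (n : ℝ) ^ β₁) + ENNReal.ofReal (c' * (n : ℝ) ^ β₂) := by
    intro n hn
    have hn1 : (1 : ℝ) ≤ (n : ℝ) := by exact_mod_cast hn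
    set s : ℝ := (n : ℝ) ^ (r⁻¹ : ℝ) with hsdef
    have hnb : ∀ q : ℝ, (n : ℝ) ^ (r⁻¹ * q) = s ^ q := by
      intro q
      rw [hsdef]
      exact Real.rpow_mul (Nat.cast_nonneg n) _ _
    have hs1 : 1 ≤ s := Real.one_le_rpow hn1 (inv_nonneg.2 hr0.le)
    have hs0 : (0 : ℝ) < s := lt_of_lt_of_le one_pos hs1
    set L : ℕ := ⌈s ^ a⌉₊ with hLdef
    have hsa1 : 1 ≤ s ^ a := Real.one_le_rpow hs1 ha0.le
    have hL1 : 1 ≤ L := Nat.one_le_ceil_iff.2 (lt_of_lt_of_le one_pos hsa1)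
    have hLs : s ^ a ≤ (L : ℝ) := Nat.le_ceil _
    have hL0 : (0 : ℝ) < L := lt_of_lt_of_le (lt_of_lt_of_le one_pos hsa1) hLs
    set SL : Ω → ℝ := fun ω => ∑ k ∈ Icc 1 L, Z k ω ^ ε with hSLdef
    have hse : (0 : ℝ) < s ^ ε := Real.rpow_pos_of_pos hs0 ε
    -- inclusion into the two events
    have hincl : {ω | (n : ℝ) < B ω ^ r}
        ⊆ {ω | ENNReal.ofReal (s ^ ε) ≤ ENNReal.ofReal (SL ω)} ∪ {ω | L < t ω} := by
      intro ω hω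
      by_cases htω : t ω ≤ L
      · left
        have hBs : s ≤ B ω := by
          have h1 : s ≤ (B ω ^ r) ^ (r⁻¹ : ℝ) :=
            Real.rpow_le_rpow (Nat.cast_nonneg n) (le_of_lt hω) (inv_nonneg.2 hr0.le)
          have h2 : (B ω ^ r) ^ (r⁻¹ : ℝ) = B ω := by
            rw [← Real.rpow_mul (hBnn ω), hinv, Real.rpow_one]
          rwa [h2] at h1
        have hBL : B ω ≤ ∑ k ∈ Icc 1 L, Z k ω := by
          refine Finset.sum_le_sum_of_subset_of_nonneg ?_ fun k _ _ => hZnn k ω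
          exact Finset.Icc_subset_Icc le_rfl htω
        have h3 : s ^ ε ≤ (∑ k ∈ Icc 1 L, Z k ω) ^ ε :=
          Real.rpow_le_rpow hs0.le (hBs.trans hBL) hε0.le
        have h4 : (∑ k ∈ Icc 1 L, Z k ω) ^ ε ≤ SL ω :=
          aux_sum_rpow_le hε0 hε1.le _ _ fun k => hZnn k ω
        exact ENNReal.ofReal_le_ofReal (h3.trans h4)
      · right; exact lt_of_not_ge htω
    have hsub : μ {ω | (n : ℝ) < B ω ^ r}
        ≤ μ {ω | ENNReal.ofReal (s ^ ε) ≤ ENNReal.ofReal (SL ω)} + μ {ω | L < t ω} :=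
      (measure_mono hincl).trans (measure_union_le _ _)
    -- Markov's inequality on the first event
    have hSLmeas : Measurable fun ω => ENNReal.ofReal (SL ω) := by
      apply Measurable.ennreal_ofReal
      rw [hSLdef]
      exact Finset.measurable_sum _ fun k _ => by fun_prop
    have hmark : μ {ω | ENNReal.ofReal (s ^ ε) ≤ ENNReal.ofReal (SL ω)}
        ≤ (∫⁻ ω, ENNReal.ofReal (SL ω) ∂μ) / ENNReal.ofReal (s ^ ε) :=
      meas_ge_le_lintegral_div hSLmeas.aemeasurable
        (ENNReal.ofReal_pos.2 hse).ne' ENNReal.ofReal_ne_top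
    have hint : ∫⁻ ω, ENNReal.ofReal (SL ω) ∂μ = (L : ENNReal) * M := by
      have h1 : ∀ ω, ENNReal.ofReal (SL ω) = ∑ k ∈ Icc 1 L, ENNReal.ofReal (Z k ω ^ ε) := by
        intro ω
        rw [hSLdef]
        exact ENNReal.ofReal_sum_of_nonneg fun k _ => Real.rpow_nonneg (hZnn k ω) ε
      rw [lintegral_congr h1, lintegral_finset_sum _ fun k _ => by fun_prop]
      rw [Finset.sum_congr rfl fun k hk => hMk k (Finset.mem_Icc.1 hk).1]
      rw [Finset.sum_const, Nat.card_Icc, nsmul_eq_mul]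
      norm_num
    have hLle : (L : ENNReal) ≤ ENNReal.ofReal (2 * s ^ a) := by
      rw [← ENNReal.ofReal_natCast]
      apply ENNReal.ofReal_le_ofReal
      have hceil := Nat.ceil_lt_add_one (le_trans zero_le_one hsa1)
      rw [hLdef]
      nlinarith [hsa1]
    have hXinv : (ENNReal.ofReal (s ^ ε))⁻¹ = ENNReal.ofReal (s ^ (-ε)) := by
      rw [← ENNReal.ofReal_inv_of_pos hse, Real.rpow_neg hs0.le]
    have hnβ₁ : (n : ℝ) ^ β₁ = s ^ a * s ^ (-ε) := by
      rw [hβ₁def, hnb, ← Real.rpow_add hs0]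
      try congr 1
      try ring
    have hfirst : μ {ω | ENNReal.ofReal (s ^ ε) ≤ ENNReal.ofReal (SL ω)}
        ≤ M * ENNReal.ofReal (2 * (n : ℝ) ^ β₁) := by
      refine hmark.trans ?_
      rw [hint]
      calc (L : ENNReal) * M / ENNReal.ofReal (s ^ ε)
          = (L : ENNReal) * M * (ENNReal.ofReal (s ^ ε))⁻¹ := by
            rw [div_eq_mul_inv]
        _ ≤ ENNReal.ofReal (2 * s ^ a) * M * ENNReal.ofReal (s ^ (-ε)) := by
            rw [hXinv]
            exact mul_le_mul_left (mul_le_mul_left hLle M) _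
        _ = M * ENNReal.ofReal (2 * (n : ℝ) ^ β₁) := by
            rw [hnβ₁, ← mul_assoc, mul_comm _ M, mul_assoc, ← ENNReal.ofReal_mul (by positivity)]
            try ring_nf
    -- tail bound on the second event
    have hsecond : μ {ω | L < t ω} ≤ ENNReal.ofReal (c' * (n : ℝ) ^ β₂) := by
      refine (htail L hL1).trans ?_
      apply ENNReal.ofReal_le_ofReal
      have hLneg : (L : ℝ) ^ (-(1 / 2) : ℝ) ≤ (s ^ a) ^ (-(1 / 2) : ℝ) :=
        (Real.rpow_le_rpow_iff_of_neg hL0 (lt_of_lt_of_le one_pos hsa1) (by norm_num)).2 hLs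
      have h5 : ((s ^ a) : ℝ) ^ (-(1 / 2) : ℝ) = (n : ℝ) ^ β₂ := by
        rw [hβ₂def, hnb, ← Real.rpow_mul hs0.le]
        try congr 1
        try ring
      have hLnn : (0 : ℝ) ≤ (L : ℝ) ^ (-(1 / 2) : ℝ) :=
        Real.rpow_nonneg (Nat.cast_nonneg L) _
      calc c * (L : ℝ) ^ (-(1 / 2) : ℝ)
          ≤ c' * (L : ℝ) ^ (-(1 / 2) : ℝ) :=
            mul_le_mul_of_nonneg_right (le_max_left c 0) hLnn
        _ ≤ c' * (s ^ a) ^ (-(1 / 2) : ℝ) :=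
            mul_le_mul_of_nonneg_left hLneg hc'0
        _ = c' * (n : ℝ) ^ β₂ := by rw [h5]
    exact hsub.trans (add_le_add hfirst hsecond)
  -- Step 3: summability and conclusion
  have hsum : ∑' n : ℕ, (M * ENNReal.ofReal (2 * (n : ℝ) ^ β₁)
      + ENNReal.ofReal (c' * (n : ℝ) ^ β₂)) < ⊤ := by
    have hs1' : ∑' n : ℕ, ENNReal.ofReal (2 * (n : ℝ) ^ β₁) < ⊤ := by
      rw [← ENNReal.ofReal_tsum_of_nonneg
        (fun n => by positivity) ((Real.summable_nat_rpow.2 hβ₁).mul_left 2)]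
      exact ENNReal.ofReal_lt_top
    have hs2' : ∑' n : ℕ, ENNReal.ofReal (c' * (n : ℝ) ^ β₂) < ⊤ := by
      rw [← ENNReal.ofReal_tsum_of_nonneg
        (fun n => mul_nonneg hc'0 (Real.rpow_nonneg (Nat.cast_nonneg n) _))
        ((Real.summable_nat_rpow.2 hβ₂).mul_left c')]
      exact ENNReal.ofReal_lt_top
    rw [ENNReal.tsum_add, ENNReal.tsum_mul_left]
    exact ENNReal.add_lt_top.2 ⟨ENNReal.mul_lt_top hMlt hs1', hs2'⟩
  refine lt_of_le_of_lt key ?_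
  rw [tsum_eq_zero_add' ENNReal.summable]
  have h0 : μ {ω | ((0 : ℕ) : ℝ) < B ω ^ r} ≤ 1 := prob_le_one
  have hrest : ∑' n : ℕ, μ {ω | ((n + 1 : ℕ) : ℝ) < B ω ^ r}
      ≤ ∑' n : ℕ, (M * ENNReal.ofReal (2 * ((n + 1 : ℕ) : ℝ) ^ β₁)
        + ENNReal.ofReal (c' * ((n + 1 : ℕ) : ℝ) ^ β₂)) :=
    ENNReal.tsum_le_tsum fun n => hterm (n + 1) (Nat.succ_le_succ (Nat.zero_le n))
  have hshift : ∑' n : ℕ, (M * ENNReal.ofReal (2 * ((n + 1 : ℕ) : ℝ) ^ β₁)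
        + ENNReal.ofReal (c' * ((n + 1 : ℕ) : ℝ) ^ β₂))
      ≤ ∑' n : ℕ, (M * ENNReal.ofReal (2 * (n : ℝ) ^ β₁)
        + ENNReal.ofReal (c' * (n : ℝ) ^ β₂)) := by
    rw [tsum_eq_zero_add' (f := fun n : ℕ => M * ENNReal.ofReal (2 * (n : ℝ) ^ β₁)
      + ENNReal.ofReal (c' * (n : ℝ) ^ β₂)) ENNReal.summable]
    exact le_add_self
  calc μ {ω | ((0 : ℕ) : ℝ) < B ω ^ r} + ∑' n : ℕ, μ {ω | ((n + 1 : ℕ) : ℝ) < B ω ^ r}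
      ≤ 1 + ∑' n : ℕ, (M * ENNReal.ofReal (2 * (n : ℝ) ^ β₁)
        + ENNReal.ofReal (c' * (n : ℝ) ^ β₂)) := add_le_add h0 (hrest.trans hshift)
    _ < ⊤ := ENNReal.add_lt_top.2 ⟨ENNReal.one_lt_top, hsum⟩
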